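/- Let G be a finite group of prime power order. Then the enhanced power graph of G is perfect. -/

import Mathlib

def powerGraph (G : Type*) [Group G] : SimpleGraph G where
  Adj x y := x ≠ y ∧ ((∃ n : ℤ, n ≠ 0 ∧ y = x ^ n) ∨ ∃ n : ℤ, n ≠ 0 ∧ x = y ^ n)
  symm := ⟨fun _ _ ⟨h, h2⟩ => ⟨h.symm, h2.symm⟩⟩
  loopless := ⟨fun _ ⟨h, _⟩ => h rfl⟩

def enhancedPowerGraph (G : Type*) [Group G] : SimpleGraph G where
  Adj x y := x ≠ y ∧ ∃ z : G, x ∈ Subgroup.zpowers z ∧ y ∈ Subgroup.zpowers z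
  symm := ⟨fun _ _ ⟨h, z, hx, hy⟩ => ⟨h.symm, z, hy, hx⟩⟩
  loopless := ⟨fun _ ⟨h, _⟩ => h rfl⟩


/-- A graph is perfect if every induced subgraph has chromatic number equal to
its clique number. -/
def SimpleGraph.IsPerfect {V : Type*} (G : SimpleGraph V) : Prop :=
  ∀ s : Set V, (G.induce s).chromaticNumber = ((G.induce s).cliqueNum : ℕ∞)

section AuxProof
open Subgroup Finset

-- Key group-theoretic lemma: inside a common cyclic subgroup, order divisibility
-- gives membership.
lemma mem_zpowers_of_orderOf_dvd {G : Type*} [Group G] [Fintype G] {x y z : G}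
    (hx : x ∈ zpowers z) (hy : y ∈ zpowers z) (h : orderOf x ∣ orderOf y) :
    x ∈ zpowers y := by
  classical
  have hcyc : IsCyclic ↥(zpowers z) := by
    refine ⟨⟨⟨z, mem_zpowers z⟩, fun w => ?_⟩⟩
    obtain ⟨k, hk⟩ := w.2
    exact ⟨k, Subtype.ext (by simpa using hk)⟩
  set x' : ↥(zpowers z) := ⟨x, hx⟩
  set y' : ↥(zpowers z) := ⟨y, hy⟩
  set S : Finset ↥(zpowers z) := univ.filter (fun a => a ^ orderOf y = 1) with hS
  set T : Finset ↥(zpowers z) := (zpowers y' : Set ↥(zpowers z)).toFinset with hT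
  have hordy : 0 < orderOf y := orderOf_pos y
  have hSle : S.card ≤ orderOf y := by
    have := IsCyclic.card_pow_eq_one_le (α := ↥(zpowers z)) (n := orderOf y) hordy
    convert this using 2
  have hyy : orderOf y' = orderOf y := Subgroup.orderOf_mk y hy
  have hTS : T ⊆ S := by
    intro a ha
    rw [hT, Set.mem_toFinset] at ha
    have h2 : orderOf a ∣ orderOf y' := orderOf_dvd_of_mem_zpowers ha
    rw [hS, mem_filter]
    refine ⟨mem_univ _, ?_⟩
    rw [← orderOf_dvd_iff_pow_eq_one]
    rw [hyy] at h2; exact h2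
  have hTcard : T.card = orderOf y := by
    rw [hT, Set.toFinset_card]
    simpa [Fintype.card_zpowers] using hyy
  have hST : T = S := Finset.eq_of_subset_of_card_le hTS (hSle.trans hTcard.ge)
  have hxS : x' ∈ S := by
    rw [hS, mem_filter]
    refine ⟨mem_univ _, ?_⟩
    rw [← orderOf_dvd_iff_pow_eq_one]
    have hxx : orderOf x' = orderOf x := Subgroup.orderOf_mk x hx
    rw [hxx]; exact h
  rw [← hST, hT, Set.mem_toFinset] at hxS
  obtain ⟨k, hk⟩ := hxS
  exact ⟨k, by simpa using congrArg (Subtype.val) hk⟩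

open scoped Classical in
noncomputable def htAux {V : Type*} [Fintype V] (r : V → V → Prop) (wf : WellFounded r) : V → ℕ :=
  wf.fix (fun x ih =>
    ((Finset.univ.filter (fun y => r y x)).attach.sup
      fun y => ih y.1 (Finset.mem_filter.mp y.2).2 + 1))

open scoped Classical in
lemma htAux_eq {V : Type*} [Fintype V] (r : V → V → Prop) (wf : WellFounded r) (x : V) :
    htAux r wf x = ((Finset.univ.filter (fun y => r y x)).attach.sup
      fun y => htAux r wf y.1 + 1) := by
  rw [htAux, WellFounded.fix_eq]

lemma htAux_lt {V : Type*} [Fintype V] (r : V → V → Prop) (wf : WellFounded r)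
    {a b : V} (hab : r a b) : htAux r wf a < htAux r wf b := by
  classical
  rw [htAux_eq r wf b]
  have ha : a ∈ Finset.univ.filter (fun y => r y b) := by
    simp [hab]
  calc htAux r wf a < htAux r wf a + 1 := Nat.lt_succ_self _
    _ ≤ _ := Finset.le_sup (f := fun y : {y // y ∈ Finset.univ.filter (fun y => r y b)} =>
        htAux r wf y.1 + 1) (Finset.mem_attach _ ⟨a, ha⟩)

lemma htAux_chain {V : Type*} [Fintype V] (r : V → V → Prop) (wf : WellFounded r)
    (htrans : Transitive r) (hirr : Irreflexive r) (x : V) :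
    ∃ C : Finset V, x ∈ C ∧ (∀ a ∈ C, a = x ∨ r a x) ∧ C.card = htAux r wf x + 1 ∧
      (∀ a ∈ C, ∀ b ∈ C, a ≠ b → r a b ∨ r b a) := by
  classical
  induction x using WellFounded.induction wf with
  | _ x IH =>
    by_cases hne : (Finset.univ.filter (fun y => r y x)).Nonempty
    · obtain ⟨y, hy, hsup⟩ := Finset.exists_mem_eq_sup
        (Finset.univ.filter (fun y => r y x)).attach
        (by simpa using hne) (fun y => htAux r wf y.1 + 1)
      have hryx : r y.1 x := (Finset.mem_filter.mp y.2).2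
      have hx_eq : htAux r wf x = htAux r wf y.1 + 1 := by
        rw [htAux_eq r wf x]
        convert hsup using 2
      obtain ⟨C, hyC, hall, hcard, hcomp⟩ := IH y.1 hryx
      have hxC : x ∉ C := by
        intro hxmem
        rcases hall x hxmem with h | h
        · rw [← h] at hryx; exact hirr _ hryx
        · exact hirr _ (htrans h hryx)
      refine ⟨insert x C, Finset.mem_insert_self _ _, ?_, ?_, ?_⟩
      · intro a ha
        rcases Finset.mem_insert.mp ha with rfl | ha
        · exact Or.inl rfl
        · rcases hall a ha with rfl | h
          · exact Or.inr hryx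
          · exact Or.inr (htrans h hryx)
      · rw [Finset.card_insert_of_notMem hxC, hcard, hx_eq]
      · intro a ha b hb hab
        rcases Finset.mem_insert.mp ha with ha' | ha'
        · rcases Finset.mem_insert.mp hb with hb' | hb'
          · exact absurd (ha'.trans hb'.symm) hab
          · rcases hall b hb' with hb'' | hb''
            · exact Or.inr (by rw [ha', hb'']; exact hryx)
            · exact Or.inr (by rw [ha']; exact htrans hb'' hryx)
        · rcases Finset.mem_insert.mp hb with hb' | hb'
          · rcases hall a ha' with ha'' | ha''
            · exact Or.inl (by rw [hb', ha'']; exact hryx)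
            · exact Or.inl (by rw [hb']; exact htrans ha'' hryx)
          · exact hcomp a ha' b hb' hab
    · refine ⟨{x}, Finset.mem_singleton_self x, by simp, ?_, by simp⟩
      rw [Finset.card_singleton, htAux_eq r wf x]
      rw [Finset.not_nonempty_iff_eq_empty] at hne
      simp [hne]

/-- A comparability graph of a finite strict order has chromatic number equal to
its clique number. -/
lemma chromaticNumber_eq_cliqueNum_of_comparability {V : Type*} [Fintype V]
    (G : SimpleGraph V) (r : V → V → Prop) (htrans : Transitive r) (hirr : Irreflexive r)
    (hadj : ∀ x y, G.Adj x y ↔ r x y ∨ r y x) :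
    G.chromaticNumber = (G.cliqueNum : ℕ∞) := by
  classical
  have : IsTrans V r := ⟨htrans⟩
  have : IsIrrefl V r := ⟨hirr⟩
  have wf : WellFounded r := Finite.wellFounded_of_trans_of_irrefl r
  have hx : ∀ x : V, htAux r wf x < G.cliqueNum := by
    intro x
    obtain ⟨C, hxC, hall, hcard, hcomp⟩ := htAux_chain r wf htrans hirr x
    have hcl : G.IsClique (C : Set V) := by
      intro a ha b hb hne
      exact (hadj a b).mpr (hcomp a ha b hb hne)
    have hle : C.card ≤ G.cliqueNum :=
      SimpleGraph.IsClique.card_le_cliqueNum (tc := hcl)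
    omega
  have col : G.Colorable G.cliqueNum := by
    refine ⟨SimpleGraph.Coloring.mk (fun x => ⟨htAux r wf x, hx x⟩) ?_⟩
    intro a b hab h
    have h' : htAux r wf a = htAux r wf b := by
      simpa using congrArg Fin.val h
    rcases (hadj a b).mp hab with hr | hr
    · exact (htAux_lt r wf hr).ne h'
    · exact (htAux_lt r wf hr).ne h'.symm
  refine le_antisymm col.chromaticNumber_le ?_
  obtain ⟨s, hs⟩ := G.exists_isNClique_cliqueNum
  have := SimpleGraph.IsClique.card_le_chromaticNumber (s := s) hs.isClique
  rw [hs.card_eq] at this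
  exact_mod_cast this

-- comparability in a p-group
lemma pgroup_zpowers_comparable {G : Type*} [Group G] [Fintype G] {p n : ℕ}
    (hp : p.Prime) (hcard : Fintype.card G = p ^ n) {x y z : G}
    (hx : x ∈ zpowers z) (hy : y ∈ zpowers z) :
    x ∈ zpowers y ∨ y ∈ zpowers x := by
  have hdx : orderOf x ∣ p ^ n := hcard ▸ orderOf_dvd_card
  have hdy : orderOf y ∣ p ^ n := hcard ▸ orderOf_dvd_card
  obtain ⟨a, -, hax⟩ := (Nat.dvd_prime_pow hp).mp hdx
  obtain ⟨b, -, hby⟩ := (Nat.dvd_prime_pow hp).mp hdy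
  rcases le_total a b with hab | hab
  · exact Or.inl (mem_zpowers_of_orderOf_dvd hx hy
      (by rw [hax, hby]; exact pow_dvd_pow p hab))
  · exact Or.inr (mem_zpowers_of_orderOf_dvd hy hx
      (by rw [hax, hby]; exact pow_dvd_pow p hab))

/-- Every finite group of prime power order has a perfect enhanced power graph. -/
theorem enhanced_isPerfect_of_prime_pow_card {G : Type*} [Group G] [Fintype G]
    {p n : ℕ} (hp : p.Prime) (hcard : Fintype.card G = p ^ n) :
    (enhancedPowerGraph G).IsPerfect := by
  classical
  intro s
  have : Fintype ↥s := Fintype.ofFinite _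
  let e : G ≃ Fin (Fintype.card G) := Fintype.equivFin G
  let rG : G → G → Prop := fun x y =>
    zpowers x < zpowers y ∨ (zpowers x = zpowers y ∧ e x < e y)
  let r : ↥s → ↥s → Prop := fun a b => rG a.1 b.1
  have htrans : Transitive r := by
    rintro a b c (h1 | ⟨h1, h1'⟩) (h2 | ⟨h2, h2'⟩)
    · exact Or.inl (h1.trans h2)
    · exact Or.inl (h2 ▸ h1)
    · exact Or.inl (h1 ▸ h2)
    · exact Or.inr ⟨h1.trans h2, h1'.trans h2'⟩
  have hirr : Irreflexive r := by
    rintro a (h | ⟨-, h⟩)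
    · exact lt_irrefl _ h
    · exact lt_irrefl _ h
  have hadj : ∀ a b : ↥s, ((enhancedPowerGraph G).induce s).Adj a b ↔ r a b ∨ r b a := by
    intro a b
    constructor
    · rintro ⟨hne, z, hxz, hyz⟩
      rcases pgroup_zpowers_comparable hp hcard hxz hyz with h | h
      · -- a.1 ∈ zpowers b.1
        rcases lt_or_eq_of_le (zpowers_le.mpr h) with hlt | heq
        · exact Or.inl (Or.inl hlt)
        · rcases lt_or_gt_of_ne (fun hh : e a.1 = e b.1 => hne (e.injective hh)) with h' | h'
          · exact Or.inl (Or.inr ⟨heq, h'⟩)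
          · exact Or.inr (Or.inr ⟨heq.symm, h'⟩)
      · rcases lt_or_eq_of_le (zpowers_le.mpr h) with hlt | heq
        · exact Or.inr (Or.inl hlt)
        · rcases lt_or_gt_of_ne (fun hh : e a.1 = e b.1 => hne (e.injective hh)) with h' | h'
          · exact Or.inl (Or.inr ⟨heq.symm, h'⟩)
          · exact Or.inr (Or.inr ⟨heq, h'⟩)
    · have key : ∀ u v : G, rG u v → (enhancedPowerGraph G).Adj u v := by
        rintro u v (h | ⟨h, h'⟩)
        · refine ⟨fun huv => absurd (huv ▸ h) (lt_irrefl _), v, ?_, mem_zpowers v⟩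
          exact h.le (mem_zpowers u)
        · refine ⟨fun huv => absurd (huv ▸ h') (lt_irrefl _), v, ?_, mem_zpowers v⟩
          exact h.le (mem_zpowers u)
      rintro (h | h)
      · exact key _ _ h
      · exact (key _ _ h).symm
  exact chromaticNumber_eq_cliqueNum_of_comparability _ r htrans hirr hadj

end AuxProof
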